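/- Let r ≥ 2 and for each k let λ⁽ᵏ⁾, λ'⁽ᵏ⁾ ∈ ℝ^{n_k} be vectors of nonnegative numbers, and σ², σ'² ≥ 0. Suppose σ² + ∏_{k=1}^r λ⁽ᵏ⁾_{i_k} = σ'² + ∏_{k=1}^r λ'⁽ᵏ⁾_{i_k} for all index tuples (i₁,…,i_r). If some λ⁽ᵏ⁾ has a zero entry and each λ⁽ᵏ⁾ has a nonzero entry, then σ² = σ'². -/
import Mathlib

/-- Eigenvalue-matching step of the identifiability proof: if
`σ² + ∏ₖ λ⁽ᵏ⁾_{i_k} = σ'² + ∏ₖ λ'⁽ᵏ⁾_{i_k}` for all index tuples, some `λ⁽ᵏ⁾`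
(for each of the two parameterizations, as both have rank-deficient `B_k`) has a zero
entry and each `λ⁽ᵏ⁾` has a nonzero entry, then `σ² = σ'²`. -/
theorem identifiability_sigma_eq {r : ℕ} (hr : 2 ≤ r) {n : Fin r → ℕ}
    (lam lam' : ∀ k, Fin (n k) → ℝ)
    (hlam : ∀ k j, 0 ≤ lam k j) (hlam' : ∀ k j, 0 ≤ lam' k j)
    (σ2 σ2' : ℝ) (hσ2 : 0 ≤ σ2) (hσ2' : 0 ≤ σ2')
    (heq : ∀ i : ∀ k, Fin (n k), σ2 + ∏ k, lam k (i k) = σ2' + ∏ k, lam' k (i k))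
    (hzero : ∃ k j, lam k j = 0) (hzero' : ∃ k j, lam' k j = 0)
    (hnonzero : ∀ k, ∃ j, lam k j ≠ 0) :
    σ2 = σ2' := by
  obtain ⟨k₀, j₀, h0⟩ := hzero
  obtain ⟨k₁, j₁, h1⟩ := hzero'
  have hbase : ∀ k, Fin (n k) := fun k => (hnonzero k).choose
  have h₁ : σ2' ≤ σ2 := by
    set i := Function.update hbase k₀ j₀ with hi
    have hp : ∏ k, lam k (i k) = 0 :=
      Finset.prod_eq_zero (Finset.mem_univ k₀) (by simp [hi, h0])
    have := heq i
    rw [hp, add_zero] at this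
    rw [this]
    have hnn := Finset.prod_nonneg (fun k (_ : k ∈ Finset.univ) => hlam' k (i k))
    linarith [Finset.prod_nonneg (fun k (_ : k ∈ Finset.univ) => hlam' k (i k))]
  have h₂ : σ2 ≤ σ2' := by
    set i := Function.update hbase k₁ j₁ with hi
    have hp : ∏ k, lam' k (i k) = 0 :=
      Finset.prod_eq_zero (Finset.mem_univ k₁) (by simp [hi, h1])
    have := heq i
    rw [hp, add_zero] at this
    rw [← this]
    have hnn := Finset.prod_nonneg (fun k (_ : k ∈ Finset.univ) => hlam k (i k))
    linarith
  linarith
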